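/- Let τ > 0, ε ≥ 0, 0 ≤ η < 1, δ1 ≥ 0, and v_min be the minimum speed. Suppose the current safe-distance slack satisfies g ≥ 0, the leader's next-step speed satisfies v₀⁺ ≥ v_min, and the follower's speed satisfies v ≥ v_min. Then ā_d = (εv − η·u_prev + (g + τ(v₀⁺ − v))/(τ²(δ1 + 1)))/(1 − η) and a_lo = (v_min − (1 − τε)v − τη·u_prev)/(τ(1 − η)) satisfy ā_d ≥ a_lo; in fact τ(1 − η)(ā_d − a_lo) = (g/τ + v₀⁺ − v_min + δ1(v − v_min))/(δ1 + 1). -/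
import Mathlib

/-- the safe-distance control bound `ā_d` is at least the
lower speed-limit bound `a_lo`, with an explicit identity for their gap. -/
theorem a_d_ge_a_lo
    (τ ε η δ1 vmin g v₀' v uprev : ℝ)
    (hτ : 0 < τ) (hε : 0 ≤ ε) (hη0 : 0 ≤ η) (hη1 : η < 1)
    (hδ1 : 0 ≤ δ1)
    (hg : 0 ≤ g) (hv₀' : vmin ≤ v₀') (hvlb : vmin ≤ v) :
    (ε * v - η * uprev + (g + τ * (v₀' - v)) / (τ ^ 2 * (δ1 + 1))) /
        (1 - η) ≥
      (vmin - (1 - τ * ε) * v - τ * η * uprev) / (τ * (1 - η)) ∧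
    τ * (1 - η) *
        ((ε * v - η * uprev + (g + τ * (v₀' - v)) / (τ ^ 2 * (δ1 + 1))) /
            (1 - η) -
          (vmin - (1 - τ * ε) * v - τ * η * uprev) / (τ * (1 - η))) =
      (g / τ + v₀' - vmin + δ1 * (v - vmin)) / (δ1 + 1) := by
  have hτ0 : τ ≠ 0 := ne_of_gt hτ
  have hδ0 : δ1 + 1 > 0 := by linarith
  have hη : 1 - η > 0 := by linarith
  have hid : τ * (1 - η) *
        ((ε * v - η * uprev + (g + τ * (v₀' - v)) / (τ ^ 2 * (δ1 + 1))) /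
            (1 - η) -
          (vmin - (1 - τ * ε) * v - τ * η * uprev) / (τ * (1 - η))) =
      (g / τ + v₀' - vmin + δ1 * (v - vmin)) / (δ1 + 1) := by
    field_simp
    ring
  refine ⟨?_, hid⟩
  have hnum : 0 ≤ (g / τ + v₀' - vmin + δ1 * (v - vmin)) / (δ1 + 1) := by
    apply div_nonneg _ (le_of_lt hδ0)
    have : 0 ≤ g / τ := div_nonneg hg hτ.le
    nlinarith
  rw [← hid] at hnum
  have h := nonneg_of_mul_nonneg_right hnum (by positivity : 0 < τ * (1 - η))
  linarith
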